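/- Greedy maximization guarantee under submodularity: if f : 2^S → ℝ is a monotone nondecreasing submodular function with f(∅) = 0 on a finite ground set S, then the greedy algorithm that iteratively adds the element with largest marginal gain for M steps returns a set S^R of size M with f(S^R) ≥ (1 − 1/e) · max_{|A| ≤ M} f(A). -/

import Mathlib

open Finset

/-- `f` is submodular on subsets of a finite ground set. -/
def Submodular {S : Type*} [DecidableEq S] (f : Finset S → ℝ) : Prop :=
  ∀ (A B : Finset S) (x : S), A ⊆ B → x ∉ B →
    f (insert x B) - f B ≤ f (insert x A) - f A

/-- `f` is monotone nondecreasing on subsets. -/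
def MonotoneSet {S : Type*} (f : Finset S → ℝ) : Prop :=
  ∀ A B : Finset S, A ⊆ B → f A ≤ f B

lemma marginal_sum {S : Type*} [DecidableEq S] (f : Finset S → ℝ)
    (hsub : Submodular f) (hmono : MonotoneSet f) (T B : Finset S) :
    f (T ∪ B) - f B ≤ ∑ x ∈ T, (f (insert x B) - f B) := by
  classical
  induction T using Finset.induction_on with
  | empty => simp
  | @insert a T ha ih =>
    rw [Finset.sum_insert ha]
    have h1 : f (insert a (T ∪ B)) - f (T ∪ B) ≤ f (insert a B) - f B := by
      by_cases hab : a ∈ T ∪ B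
      · rw [Finset.insert_eq_self.mpr hab]
        have := hmono B (insert a B) (Finset.subset_insert _ _)
        linarith
      · exact hsub B (T ∪ B) a Finset.subset_union_right hab
    have : insert a T ∪ B = insert a (T ∪ B) := by
      simp [Finset.insert_union]
    rw [this]
    linarith

/-- Greedy `(1 − 1/e)`-approximation guarantee for maximizing a monotone
submodular function `f` with `f ∅ = 0` under a cardinality constraint `M`:
the greedy chain `g` (adding a maximal-marginal-gain fresh element at each
step) yields `f (g M) ≥ (1 − 1/e) · max_{|A| ≤ M} f A`. -/
theorem greedy_submodular_guarantee {S : Type*} [Fintype S] [DecidableEq S]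
    (f : Finset S → ℝ) (hsub : Submodular f) (hmono : MonotoneSet f)
    (hempty : f ∅ = 0) (M : ℕ) (hM : M ≤ Fintype.card S)
    (g : ℕ → Finset S) (hg0 : g 0 = ∅)
    (hgreedy : ∀ i < M, ∃ x ∉ g i,
      g (i + 1) = insert x (g i) ∧
      ∀ y ∉ g i, f (insert y (g i)) ≤ f (insert x (g i))) :
    (g M).card = M ∧
    ∀ A : Finset S, A.card ≤ M → (1 - 1 / Real.exp 1) * f A ≤ f (g M) := by
  have hcard : ∀ i ≤ M, (g i).card = i := by
    intro i hi
    induction i with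
    | zero => simp [hg0]
    | succ n ih =>
      obtain ⟨x, hx, hg1, _⟩ := hgreedy n (lt_of_lt_of_le (Nat.lt_succ_self n) hi)
      rw [hg1, Finset.card_insert_of_notMem hx, ih (le_of_lt hi)]
  refine ⟨hcard M le_rfl, ?_⟩
  intro A hA
  rcases Nat.eq_zero_or_pos M with hM0 | hMpos
  · subst hM0
    have : A = ∅ := Finset.card_eq_zero.mp (Nat.le_zero.mp hA)
    simp [this, hempty, hg0]
  have hfA0 : 0 ≤ f A := by
    have := hmono ∅ A (Finset.empty_subset A)
    linarith
  have hMr : (1 : ℝ) ≤ (M : ℝ) := by exact_mod_cast hMpos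
  -- key per-step inequality
  have key : ∀ i < M, f A - f (g (i + 1)) ≤ (1 - 1 / (M : ℝ)) * (f A - f (g i)) := by
    intro i hi
    obtain ⟨x, hx, hg1, hmax⟩ := hgreedy i hi
    set δ := f (g (i + 1)) - f (g i) with hδ
    have hδ0 : 0 ≤ δ := by
      have := hmono (g i) (g (i + 1)) (by rw [hg1]; exact Finset.subset_insert _ _)
      linarith
    have hsum : f A - f (g i) ≤ (M : ℝ) * δ := by
      have h1 : f A ≤ f (A ∪ g i) := hmono A _ Finset.subset_union_left
      have h2 := marginal_sum f hsub hmono A (g i)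
      have h3 : ∑ y ∈ A, (f (insert y (g i)) - f (g i)) ≤ ∑ _y ∈ A, δ := by
        apply Finset.sum_le_sum
        intro y _
        by_cases hy : y ∈ g i
        · rw [Finset.insert_eq_self.mpr hy]; linarith
        · have := hmax y hy
          rw [hδ, hg1]; linarith
      rw [Finset.sum_const, nsmul_eq_mul] at h3
      have h4 : (A.card : ℝ) * δ ≤ (M : ℝ) * δ := by
        apply mul_le_mul_of_nonneg_right _ hδ0
        exact_mod_cast hA
      linarith
    have hMpos' : (0 : ℝ) < (M : ℝ) := by linarith
    have hdiv : (f A - f (g i)) / (M : ℝ) ≤ δ := by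
      rw [div_le_iff₀ hMpos'] at *
      linarith [hsum]
    have : f A - f (g (i + 1)) = (f A - f (g i)) - δ := by rw [hδ]; ring
    rw [this]
    have : (1 - 1 / (M : ℝ)) * (f A - f (g i)) = (f A - f (g i)) - (f A - f (g i)) / (M : ℝ) := by
      field_simp
    rw [this]
    linarith
  have hq0 : 0 ≤ 1 - 1 / (M : ℝ) := by
    have : 1 / (M : ℝ) ≤ 1 := by
      rw [div_le_one (by linarith)]; exact hMr
    linarith
  have hiter : ∀ i ≤ M, f A - f (g i) ≤ (1 - 1 / (M : ℝ)) ^ i * f A := by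
    intro i hi
    induction i with
    | zero => simp [hg0, hempty]
    | succ n ih =>
      have hn : n < M := hi
      have h1 := key n hn
      have h2 := ih (le_of_lt hn)
      calc f A - f (g (n + 1)) ≤ (1 - 1 / (M : ℝ)) * (f A - f (g n)) := h1
        _ ≤ (1 - 1 / (M : ℝ)) * ((1 - 1 / (M : ℝ)) ^ n * f A) :=
            mul_le_mul_of_nonneg_left h2 hq0
        _ = (1 - 1 / (M : ℝ)) ^ (n + 1) * f A := by ring
  have hfinal := hiter M le_rfl
  have hpow : (1 - 1 / (M : ℝ)) ^ M ≤ 1 / Real.exp 1 := by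
    have h1 : (1 - 1 / (M : ℝ)) ≤ Real.exp (-(1 / (M : ℝ))) := by
      have := Real.add_one_le_exp (-(1 / (M : ℝ)))
      linarith
    have h2 : (1 - 1 / (M : ℝ)) ^ M ≤ (Real.exp (-(1 / (M : ℝ)))) ^ M :=
      pow_le_pow_left₀ hq0 h1 M
    have h3 : (Real.exp (-(1 / (M : ℝ)))) ^ M = Real.exp (-(1 / (M : ℝ)) * M) := by
      rw [← Real.exp_nat_mul]; ring_nf
    have h4 : -(1 / (M : ℝ)) * M = -1 := by
      field_simp
    rw [h3, h4] at h2
    rw [Real.exp_neg] at h2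
    simpa [one_div] using h2
  have : (1 - 1 / (M : ℝ)) ^ M * f A ≤ (1 / Real.exp 1) * f A :=
    mul_le_mul_of_nonneg_right hpow hfA0
  nlinarith
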